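/- For every real β > 0 and every positive integer d there is a constant C = C(β,d) > 0 such that for all integers ℓ ≥ 3, setting m := ⌊(2 log ℓ)^d / β^d⌋, one has ∑_{i > m} exp(−β i^{1/d}) ≤ C (log ℓ)^{d−1} / ℓ². -/

import Mathlib

open scoped BigOperators

open Real in
private lemma aux_pow_sub (k : ℕ) {a b : ℝ} (ha : 0 ≤ a) (hab : a ≤ b) :
    b ^ (k + 1) - a ^ (k + 1) ≤ ((k : ℝ) + 1) * b ^ k * (b - a) := by
  induction k with
  | zero => simp
  | succ k ih =>
    have hb : 0 ≤ b := ha.trans hab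
    have h1 : b * (b ^ (k + 1) - a ^ (k + 1)) ≤ b * (((k : ℝ) + 1) * b ^ k * (b - a)) :=
      mul_le_mul_of_nonneg_left ih hb
    have h2 : a ^ (k + 1) * (b - a) ≤ b ^ (k + 1) * (b - a) :=
      mul_le_mul_of_nonneg_right (pow_le_pow_left₀ ha hab _) (sub_nonneg.mpr hab)
    calc b ^ (k + 2) - a ^ (k + 2)
        = b * (b ^ (k + 1) - a ^ (k + 1)) + a ^ (k + 1) * (b - a) := by ring
      _ ≤ b * (((k : ℝ) + 1) * b ^ k * (b - a)) + b ^ (k + 1) * (b - a) := add_le_add h1 h2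
      _ = ((k : ℝ) + 1 + 1) * b ^ (k + 1) * (b - a) := by ring
      _ = ((↑(k + 1) : ℝ) + 1) * b ^ (k + 1) * (b - a) := by push_cast; ring

open Real in
private lemma aux_summable {c : ℝ} (hc : 0 < c) {d : ℕ} (hd : 1 ≤ d) :
    Summable (fun j : ℕ => Real.exp (-c * (j : ℝ) ^ ((1 : ℝ) / d))) := by
  have hd0 : (0 : ℝ) < d := by exact_mod_cast hd
  set K : ℝ := (2 * d).factorial * (2 / c) ^ (2 * d) + 1 with hK
  have hK1 : (1 : ℝ) ≤ K := by
    have h0 : (0:ℝ) ≤ (2 * d).factorial * (2 / c) ^ (2 * d) := by positivity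
    rw [hK]; linarith
  have hbase : Summable (fun j : ℕ => K * (1 / ((j : ℝ) + 1) ^ 2)) := by
    apply Summable.mul_left
    have h := (Real.summable_one_div_nat_pow (p := 2)).mpr one_lt_two
    have h2 := (summable_nat_add_iff (f := fun n : ℕ => 1 / (n : ℝ) ^ 2) 1).mpr h
    refine h2.congr fun n => by push_cast; ring
  refine Summable.of_nonneg_of_le (fun j => (Real.exp_pos _).le) (fun j => ?_) hbase
  rcases Nat.eq_zero_or_pos j with rfl | hj
  · simp only [Nat.cast_zero]
    rw [Real.zero_rpow (by positivity : (1:ℝ)/d ≠ 0)]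
    simpa using hK1
  · -- j ≥ 1
    have hj1 : (1 : ℝ) ≤ j := by exact_mod_cast hj
    have hx : (0:ℝ) ≤ (j:ℝ) + 1 := by positivity
    -- (j+1) ≤ 2^d * j
    have h2d : (2:ℝ) ≤ 2 ^ d := by
      calc (2:ℝ) = 2 ^ 1 := (pow_one 2).symm
      _ ≤ 2 ^ d := pow_le_pow_right₀ one_le_two hd
    have hstep : (j : ℝ) + 1 ≤ 2 ^ d * j := by nlinarith
    -- (2^d)^(1/d) = 2
    have h2pow : ((2:ℝ) ^ d) ^ ((1:ℝ)/d) = 2 := by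
      rw [← Real.rpow_natCast 2 d, ← Real.rpow_mul (by norm_num : (0:ℝ) ≤ 2),
        mul_one_div, div_self hd0.ne', Real.rpow_one]
    have hr : ((j : ℝ) + 1) ^ ((1:ℝ)/d) ≤ 2 * (j : ℝ) ^ ((1:ℝ)/d) := by
      calc ((j : ℝ) + 1) ^ ((1:ℝ)/d) ≤ (2 ^ d * j) ^ ((1:ℝ)/d) :=
            Real.rpow_le_rpow hx hstep (by positivity)
        _ = ((2:ℝ) ^ d) ^ ((1:ℝ)/d) * (j:ℝ) ^ ((1:ℝ)/d) :=
            Real.mul_rpow (by positivity) (by positivity)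
        _ = 2 * (j : ℝ) ^ ((1:ℝ)/d) := by rw [h2pow]
    -- exp bound
    set y : ℝ := ((j : ℝ) + 1) ^ ((1:ℝ)/d) with hy
    have hy0 : 0 ≤ y := Real.rpow_nonneg hx _
    have hexp1 : Real.exp (-c * (j:ℝ) ^ ((1:ℝ)/d)) ≤ Real.exp (-(c/2) * y) := by
      apply Real.exp_le_exp.mpr; nlinarith
    have hyd : y ^ (2 * d) = ((j : ℝ) + 1) ^ 2 := by
      rw [hy, ← Real.rpow_natCast (((j : ℝ) + 1) ^ ((1:ℝ)/d)) (2 * d),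
        ← Real.rpow_mul hx]
      have : (1:ℝ)/d * (2*d : ℕ) = 2 := by push_cast; field_simp
      rw [this, ← Real.rpow_natCast ((j:ℝ)+1) 2]; norm_num
    have hA : ((c/2) * y) ^ (2*d) / (2*d).factorial ≤ Real.exp ((c/2) * y) :=
      Real.pow_div_factorial_le_exp _ (by positivity) _
    have hApos : 0 < ((j:ℝ)+1)^2 := by positivity
    have hexp2 : Real.exp (-(c/2) * y) ≤ K * (1 / ((j:ℝ)+1)^2) := by
      have hval : ((c/2) * y) ^ (2*d) / (2*d).factorial
          = (c/2)^(2*d) / (2*d).factorial * ((j:ℝ)+1)^2 := by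
        rw [mul_pow, hyd]; ring
      rw [hval] at hA
      have hcoef : 0 < (c/2)^(2*d) / (2*d).factorial := by positivity
      have hApos2 : 0 < (c/2)^(2*d) / (2*d).factorial * ((j:ℝ)+1)^2 := by positivity
      have hinv : (Real.exp ((c/2) * y))⁻¹ ≤ ((c/2)^(2*d) / (2*d).factorial * ((j:ℝ)+1)^2)⁻¹ :=
        inv_anti₀ hApos2 hA
      rw [← Real.exp_neg] at hinv
      calc Real.exp (-(c/2) * y) = Real.exp (-((c/2) * y)) := by rw [neg_mul]
        _ ≤ ((c/2)^(2*d) / (2*d).factorial * ((j:ℝ)+1)^2)⁻¹ := hinv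
        _ = (2*d).factorial * (2/c)^(2*d) * (1 / ((j:ℝ)+1)^2) := by
            rw [mul_inv, div_pow, div_pow]
            field_simp
        _ ≤ K * (1 / ((j:ℝ)+1)^2) := by
            apply mul_le_mul_of_nonneg_right _ (by positivity)
            rw [hK]; linarith
    exact hexp1.trans hexp2

/-- for every `β > 0` and positive integer `d` there is `C > 0`
such that for all `ℓ ≥ 3`, with `m = ⌊(2 log ℓ)^d / β^d⌋`, the tail sum
`∑_{i>m} exp(−β i^{1/d})` is at most `C (log ℓ)^{d−1} / ℓ²`. -/
theorem stmt5 (β : ℝ) (hβ : 0 < β) (d : ℕ) (hd : 1 ≤ d) :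
    ∃ C : ℝ, 0 < C ∧ ∀ ℓ : ℕ, 3 ≤ ℓ →
      (∑' j : ℕ, Real.exp
          (-β * (((⌊(2 * Real.log ℓ) ^ d / β ^ d⌋₊ + 1 + j : ℕ) : ℝ) ^ ((1 : ℝ) / d))))
        ≤ C * (Real.log ℓ) ^ (d - 1) / (ℓ : ℝ) ^ 2 := by
  have hd0 : (0 : ℝ) < d := by exact_mod_cast hd
  set p : ℝ := (1 : ℝ) / d with hp
  have hp0 : 0 < p := by positivity
  have hp1 : p ≤ 1 := by
    rw [hp, div_le_one hd0]; exact_mod_cast hd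
  -- the constant T
  have hTs : Summable (fun j : ℕ => Real.exp (-(β / 2) * (j : ℝ) ^ p)) :=
    aux_summable (by positivity) hd
  set T : ℝ := ∑' j : ℕ, Real.exp (-(β / 2) * (j : ℝ) ^ p) with hT
  have hT0 : 0 ≤ T := tsum_nonneg fun j => (Real.exp_pos _).le
  set c1 : ℝ := 1 + (d : ℝ) * 2 ^ d / β + T with hc1
  have hc1pos : 0 < c1 := by positivity
  refine ⟨c1 * (2 / β + 1) ^ (d - 1), by positivity, fun ℓ hℓ => ?_⟩
  -- basic facts about ℓ
  have hL1 : (1 : ℝ) < (ℓ : ℝ) := by exact_mod_cast lt_of_lt_of_le (by norm_num) hℓ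
  have hL0 : (0 : ℝ) < (ℓ : ℝ) := lt_trans one_pos hL1
  have hlog1 : (1 : ℝ) ≤ Real.log ℓ := by
    have h3 : (3 : ℝ) ≤ (ℓ : ℝ) := by exact_mod_cast hℓ
    have : Real.exp 1 ≤ (ℓ : ℝ) :=
      le_trans (Real.exp_one_lt_d9.le.trans (by norm_num)) h3
    rwa [← Real.le_log_iff_exp_le hL0] at this
  have hlog0 : 0 < Real.log ℓ := lt_of_lt_of_le one_pos hlog1
  set m : ℕ := ⌊(2 * Real.log ℓ) ^ d / β ^ d⌋₊ with hm
  set n : ℕ := m + 1 with hn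
  have hn1 : (1 : ℝ) ≤ (n : ℝ) := by exact_mod_cast Nat.one_le_iff_ne_zero.mpr (by omega)
  have hn0 : (0 : ℝ) ≤ (n : ℝ) := le_trans zero_le_one hn1
  set q : ℝ := ((d : ℝ) - 1) / d with hq
  have hq0 : 0 ≤ q := by
    apply div_nonneg _ hd0.le; linarith [show (1:ℝ) ≤ d by exact_mod_cast hd]
  have hq1 : q ≤ 1 := by
    rw [hq, div_le_one hd0]; linarith
  set nd1 : ℝ := (n : ℝ) ^ q with hnd1def
  have hnd1 : 1 ≤ nd1 := Real.one_le_rpow hn1 hq0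
  have hnd1' : 0 < nd1 := lt_of_lt_of_le one_pos hnd1
  set D : ℝ := (d : ℝ) * 2 ^ d * nd1 with hD
  have hDpos : 0 < D := by positivity
  -- helper: (y ^ p) ^ d = y for 0 ≤ y
  have hpowinv : ∀ y : ℝ, 0 ≤ y → (y ^ p) ^ d = y := by
    intro y hy
    rw [← Real.rpow_natCast (y ^ p) d, ← Real.rpow_mul hy, hp, one_div,
      inv_mul_cancel₀ hd0.ne', Real.rpow_one]
  -- helper: (y ^ p) ^ (d - 1) = y ^ q for 0 ≤ y
  have hpowq : ∀ y : ℝ, 0 ≤ y → (y ^ p) ^ (d - 1) = y ^ q := by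
    intro y hy
    rw [← Real.rpow_natCast (y ^ p) (d - 1), ← Real.rpow_mul hy]
    congr 1
    rw [hp, hq, Nat.cast_sub hd, Nat.cast_one]
    field_simp
  -- termwise key bound
  have key : ∀ j : ℕ, Real.exp (-β * (((n + j : ℕ) : ℝ) ^ p)) ≤
      Real.exp (-β * (n : ℝ) ^ p) *
        (Real.exp (-(β / D) * j) + Real.exp (-(β / 2) * (j : ℝ) ^ p)) := by
    intro j
    set x : ℝ := ((n + j : ℕ) : ℝ) with hx
    have hxval : x = (n : ℝ) + j := by rw [hx]; push_cast; ring
    have hx0 : 0 ≤ x := by rw [hxval]; positivity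
    set a : ℝ := (n : ℝ) ^ p with ha
    set b : ℝ := x ^ p with hb
    have ha0 : 0 ≤ a := Real.rpow_nonneg hn0 _
    have hab : a ≤ b := Real.rpow_le_rpow hn0 (by rw [hxval]; linarith [Nat.cast_nonneg (α := ℝ) j]) hp0.le
    have hb0 : 0 ≤ b := le_trans ha0 hab
    have had : a ^ d = (n : ℝ) := hpowinv _ hn0
    have hbd : b ^ d = x := hpowinv _ hx0
    by_cases hcase : (n + j : ℕ) ≤ 2 ^ d * n
    · -- close range: use mean value type bound
      have hcaseR : x ≤ 2 ^ d * (n : ℝ) := by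
        rw [hx]
        calc ((n + j : ℕ) : ℝ) ≤ ((2 ^ d * n : ℕ) : ℝ) := by exact_mod_cast hcase
          _ = 2 ^ d * (n : ℝ) := by push_cast; ring
      -- b ^ (d-1) ≤ 2^d * nd1
      have hbq : b ^ (d - 1) ≤ 2 ^ d * nd1 := by
        rw [hb, hpowq _ hx0]
        calc x ^ q ≤ (2 ^ d * (n : ℝ)) ^ q := Real.rpow_le_rpow hx0 hcaseR hq0
          _ = ((2 : ℝ) ^ d) ^ q * (n : ℝ) ^ q := Real.mul_rpow (by positivity) hn0
          _ ≤ 2 ^ d * nd1 := by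
              apply mul_le_mul_of_nonneg_right _ (Real.rpow_nonneg hn0 _)
              calc ((2 : ℝ) ^ d) ^ q ≤ ((2 : ℝ) ^ d) ^ (1 : ℝ) :=
                    Real.rpow_le_rpow_of_exponent_le (one_le_pow₀ one_le_two) hq1
                _ = 2 ^ d := Real.rpow_one _
      -- j ≤ D * (b - a)
      have hsub : b ^ d - a ^ d ≤ (d : ℝ) * b ^ (d - 1) * (b - a) := by
        have h := aux_pow_sub (d - 1) ha0 hab
        have hd1 : d - 1 + 1 = d := Nat.succ_pred_eq_of_pos hd
        rw [hd1] at h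
        have hcast : ((d - 1 : ℕ) : ℝ) + 1 = (d : ℝ) := by
          rw [Nat.cast_sub hd, Nat.cast_one]; ring
        rwa [hcast] at h
      have hj : (j : ℝ) ≤ D * (b - a) := by
        have h1 : b ^ d - a ^ d = (j : ℝ) := by rw [had, hbd, hxval]; ring
        have h2 : (d : ℝ) * b ^ (d - 1) * (b - a) ≤ D * (b - a) := by
          apply mul_le_mul_of_nonneg_right _ (sub_nonneg.mpr hab)
          rw [hD]
          calc (d : ℝ) * b ^ (d - 1) ≤ (d : ℝ) * (2 ^ d * nd1) :=
                mul_le_mul_of_nonneg_left hbq hd0.le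
            _ = (d : ℝ) * 2 ^ d * nd1 := by ring
        linarith [hsub, h1 ▸ hsub]
      -- conclude
      have harg : -β * b ≤ -β * a + -(β / D) * j := by
        have h' : (j : ℝ) / D ≤ b - a := (div_le_iff₀ hDpos).mpr (by linarith [hj])
        have hstep : a + (j : ℝ) / D ≤ b := by linarith
        have hmul : β * (a + (j : ℝ) / D) ≤ β * b := mul_le_mul_of_nonneg_left hstep hβ.le
        have he1 : β * (a + (j : ℝ) / D) = β * a + (β / D) * j := by ring
        linarith
      calc Real.exp (-β * x ^ p) ≤ Real.exp (-β * a + -(β / D) * j) := Real.exp_le_exp.mpr harg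
        _ = Real.exp (-β * a) * Real.exp (-(β / D) * j) := Real.exp_add _ _
        _ ≤ Real.exp (-β * a) * (Real.exp (-(β / D) * j) + Real.exp (-(β / 2) * (j : ℝ) ^ p)) := by
            apply mul_le_mul_of_nonneg_left _ (Real.exp_pos _).le
            linarith [(Real.exp_pos (-(β / 2) * (j : ℝ) ^ p)).le]
    · -- far range
      push_neg at hcase
      have hcaseR : 2 ^ d * (n : ℝ) ≤ x := by
        rw [hx]
        calc (2 : ℝ) ^ d * (n : ℝ) = ((2 ^ d * n : ℕ) : ℝ) := by push_cast; ring
          _ ≤ ((n + j : ℕ) : ℝ) := by exact_mod_cast hcase.le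
      -- a ≤ b / 2
      have h2pq : ((2 : ℝ) ^ d) ^ p = 2 := by
        rw [← Real.rpow_natCast 2 d, ← Real.rpow_mul (by norm_num : (0:ℝ) ≤ 2), hp,
          mul_one_div, div_self hd0.ne', Real.rpow_one]
      have hab2 : 2 * a ≤ b := by
        have : ((2:ℝ) ^ d * (n:ℝ)) ^ p ≤ b := Real.rpow_le_rpow (by positivity) hcaseR hp0.le
        rwa [Real.mul_rpow (by positivity) hn0, h2pq] at this
      -- j ^ p ≤ b
      have hjb : (j : ℝ) ^ p ≤ b :=
        Real.rpow_le_rpow (Nat.cast_nonneg j) (by rw [hxval]; linarith) hp0.le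
      have harg : -β * b ≤ -β * a + -(β / 2) * (j : ℝ) ^ p := by
        have h1 : β * a ≤ β * (b / 2) := mul_le_mul_of_nonneg_left (by linarith) hβ.le
        have h2 : (β / 2) * ((j : ℝ) ^ p) ≤ (β / 2) * b :=
          mul_le_mul_of_nonneg_left hjb (by positivity)
        have he : -β * b = -(β * (b / 2)) - (β / 2) * b := by ring
        linarith
      calc Real.exp (-β * x ^ p) ≤ Real.exp (-β * a + -(β / 2) * (j : ℝ) ^ p) :=
            Real.exp_le_exp.mpr harg
        _ = Real.exp (-β * a) * Real.exp (-(β / 2) * (j : ℝ) ^ p) := Real.exp_add _ _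
        _ ≤ Real.exp (-β * a) * (Real.exp (-(β / D) * j) + Real.exp (-(β / 2) * (j : ℝ) ^ p)) := by
            apply mul_le_mul_of_nonneg_left _ (Real.exp_pos _).le
            linarith [(Real.exp_pos (-(β / D) * j)).le]

  -- summability of the main series
  have hf : Summable (fun j : ℕ => Real.exp (-β * (((n + j : ℕ) : ℝ) ^ p))) := by
    refine Summable.of_nonneg_of_le (fun j => (Real.exp_pos _).le) (fun j => ?_)
      (aux_summable hβ hd)
    apply Real.exp_le_exp.mpr
    have hj : (j : ℝ) ≤ ((n + j : ℕ) : ℝ) := by push_cast; linarith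
    have h1 := Real.rpow_le_rpow (Nat.cast_nonneg j) hj hp0.le
    have h2 := mul_le_mul_of_nonneg_left h1 hβ.le
    linarith
  -- geometric series
  set r : ℝ := Real.exp (-(β / D)) with hr
  have hr0 : 0 ≤ r := (Real.exp_pos _).le
  have hr1 : r < 1 := Real.exp_lt_one_iff.mpr (neg_lt_zero.mpr (by positivity))
  have hgeo : (fun j : ℕ => Real.exp (-(β / D) * j)) = fun j : ℕ => r ^ j := by
    funext j; rw [hr, ← Real.exp_nat_mul]; ring_nf
  have hg1 : Summable (fun j : ℕ => Real.exp (-(β / D) * j)) := by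
    rw [hgeo]; exact summable_geometric_of_lt_one hr0 hr1
  have htsum1 : (∑' j : ℕ, Real.exp (-(β / D) * j)) = (1 - r)⁻¹ := by
    rw [hgeo]; exact tsum_geometric_of_lt_one hr0 hr1
  have hgeobound : (1 - r)⁻¹ ≤ 1 + D / β := by
    set s : ℝ := β / D with hs
    have hs0 : 0 < s := by positivity
    have h1 : s + 1 ≤ Real.exp s := Real.add_one_le_exp s
    have h2 : r ≤ (1 + s)⁻¹ := by
      rw [hr, Real.exp_neg]
      exact inv_anti₀ (by linarith) (by linarith)
    have heq : 1 - (1 + s)⁻¹ = s / (1 + s) := by field_simp; ring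
    have h3 : s / (1 + s) ≤ 1 - r := by
      have := h2; linarith [heq]
    have h4 : 0 < s / (1 + s) := by positivity
    have h5 : (1 - r)⁻¹ ≤ (s / (1 + s))⁻¹ := inv_anti₀ h4 h3
    have h6 : (s / (1 + s))⁻¹ = 1 / s + 1 := by
      rw [inv_div]; field_simp
    have h7 : 1 / s = D / β := by rw [hs, one_div_div]
    rw [h6, h7] at h5; linarith
  -- bound on exp(-β n^p)
  set E : ℝ := Real.exp (-β * (n : ℝ) ^ p) with hE
  have hE0 : 0 ≤ E := (Real.exp_pos _).le
  have hdiv : (2 * Real.log ℓ) ^ d / β ^ d = (2 * Real.log ℓ / β) ^ d := (div_pow _ _ _).symm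
  have hbase0 : 0 ≤ 2 * Real.log ℓ / β := by positivity
  have hydp : ((2 * Real.log ℓ / β) ^ d : ℝ) ^ p = 2 * Real.log ℓ / β := by
    rw [← Real.rpow_natCast (2 * Real.log ℓ / β) d, ← Real.rpow_mul hbase0, hp,
      mul_one_div, div_self hd0.ne', Real.rpow_one]
  have hE2 : E ≤ ((ℓ : ℝ) ^ 2)⁻¹ := by
    have hfloor : (2 * Real.log ℓ) ^ d / β ^ d < (n : ℝ) := by
      rw [hn]; push_cast; exact Nat.lt_floor_add_one _
    have h2 : ((2 * Real.log ℓ / β) ^ d : ℝ) ≤ (n : ℝ) := by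
      rw [← hdiv]; linarith
    have h3 := Real.rpow_le_rpow (by positivity) h2 hp0.le
    rw [hydp] at h3
    have h4 : 2 * Real.log ℓ ≤ β * (n : ℝ) ^ p := by
      rw [div_le_iff₀ hβ] at h3; linarith
    have h5 : E ≤ Real.exp (-(2 * Real.log ℓ)) := Real.exp_le_exp.mpr (by linarith)
    have h6 : Real.exp (-(2 * Real.log ℓ)) = ((ℓ : ℝ) ^ 2)⁻¹ := by
      rw [Real.exp_neg]
      congr 1
      rw [show (2 : ℝ) * Real.log ℓ = ((2 : ℕ) : ℝ) * Real.log ℓ by norm_num,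
        Real.exp_nat_mul, Real.exp_log hL0]
    linarith [h6 ▸ h5]
  -- sum bound
  have hsum_bound : (1 - r)⁻¹ + T ≤ c1 * nd1 := by
    have hDβ : D / β = ((d : ℝ) * 2 ^ d / β) * nd1 := by rw [hD]; ring
    have hg' : (1 - r)⁻¹ ≤ 1 + ((d : ℝ) * 2 ^ d / β) * nd1 := by rw [← hDβ]; exact hgeobound
    have h1 : T ≤ T * nd1 := le_mul_of_one_le_right hT0 hnd1
    have hexp : c1 * nd1 = nd1 + ((d : ℝ) * 2 ^ d / β) * nd1 + T * nd1 := by rw [hc1]; ring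
    rw [hexp]; linarith
  -- bound nd1 by powers of log
  have hnd1b : nd1 ≤ (2 / β + 1) ^ (d - 1) * Real.log ℓ ^ (d - 1) := by
    have hnle : (n : ℝ) ≤ (2 * Real.log ℓ / β) ^ d + 1 := by
      have hfl := Nat.floor_le (show (0 : ℝ) ≤ (2 * Real.log ℓ) ^ d / β ^ d by positivity)
      rw [← hm] at hfl
      rw [hn]; push_cast
      rw [← hdiv]
      linarith
    have h1 : (2 * Real.log ℓ / β) ^ d + 1 ≤ (2 * Real.log ℓ / β + 1) ^ d := by
      have := pow_add_pow_le hbase0 (zero_le_one (α := ℝ)) (Nat.one_le_iff_ne_zero.mp hd)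
      simpa using this
    have hbase1 : (0 : ℝ) ≤ 2 * Real.log ℓ / β + 1 := by positivity
    have h2 : nd1 ≤ ((2 * Real.log ℓ / β + 1) ^ d) ^ q := by
      rw [hnd1def]
      exact Real.rpow_le_rpow hn0 (hnle.trans h1) hq0
    have h3 : (((2 * Real.log ℓ / β + 1) ^ d : ℝ)) ^ q = (2 * Real.log ℓ / β + 1) ^ (d - 1) := by
      rw [← Real.rpow_natCast (2 * Real.log ℓ / β + 1) d, ← Real.rpow_mul hbase1, hq]
      have hqq : (d : ℝ) * (((d : ℝ) - 1) / d) = ((d - 1 : ℕ) : ℝ) := by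
        rw [Nat.cast_sub hd, Nat.cast_one]; field_simp
      rw [hqq, Real.rpow_natCast]
    have h4 : 2 * Real.log ℓ / β + 1 ≤ (2 / β + 1) * Real.log ℓ := by
      have he1 : (2 / β + 1) * Real.log ℓ = (2 / β) * Real.log ℓ + Real.log ℓ := by ring
      have he2 : 2 * Real.log ℓ / β = (2 / β) * Real.log ℓ := by ring
      linarith
    have h5 : (2 * Real.log ℓ / β + 1) ^ (d - 1) ≤ ((2 / β + 1) * Real.log ℓ) ^ (d - 1) :=
      pow_le_pow_left₀ hbase1 h4 _
    rw [mul_pow] at h5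
    rw [h3] at h2
    linarith
  -- assemble
  have hgsum : Summable (fun j : ℕ =>
      E * (Real.exp (-(β / D) * j) + Real.exp (-(β / 2) * (j : ℝ) ^ p))) :=
    (hg1.add hTs).mul_left E
  calc (∑' j : ℕ, Real.exp (-β * (((n + j : ℕ) : ℝ) ^ p)))
      ≤ ∑' j : ℕ, E * (Real.exp (-(β / D) * j) + Real.exp (-(β / 2) * (j : ℝ) ^ p)) :=
        Summable.tsum_le_tsum key hf hgsum
    _ = E * ((∑' j : ℕ, Real.exp (-(β / D) * j)) + T) := by
        rw [tsum_mul_left, Summable.tsum_add hg1 hTs, hT]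
    _ ≤ E * (c1 * nd1) := by
        apply mul_le_mul_of_nonneg_left _ hE0
        rw [htsum1]; exact hsum_bound
    _ ≤ ((ℓ : ℝ) ^ 2)⁻¹ * (c1 * nd1) := by
        apply mul_le_mul_of_nonneg_right hE2 (by positivity)
    _ ≤ ((ℓ : ℝ) ^ 2)⁻¹ * (c1 * ((2 / β + 1) ^ (d - 1) * Real.log ℓ ^ (d - 1))) := by
        apply mul_le_mul_of_nonneg_left _ (by positivity)
        exact mul_le_mul_of_nonneg_left hnd1b hc1pos.le
    _ = c1 * (2 / β + 1) ^ (d - 1) * Real.log ℓ ^ (d - 1) / (ℓ : ℝ) ^ 2 := by ring
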